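/- Assume good X, ↑good inp, ↑goodAbs binp, |dom inp| < |var| and |dom binp| < |var|. Then: (1) if (ys,y) ≠ (xs,x) then fresh ys y (Var xs x); (2) if ↑(fresh ys y) inp and ↑(freshAbs ys y) binp then fresh ys y (Op δ inp binp); (3) if (ys,y) = (xs,x) or fresh ys y X, then freshAbs ys y (Abs xs x X). -/

import Mathlib

open scoped Classical

universe u

section Binding

variable (var varsort index bindex opsym : Type u)

/-! ### Inputs -/

/-- An `(α,β)`-input: a partial function from `α` to `β`. -/
abbrev Input (α β : Type u) : Type u := α → Option β

/-- The domain of an input. -/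
def idom {α β : Type u} (inp : Input α β) : Set α := {a | inp a ≠ none}

/-- The componentwise lifting of a predicate to inputs. -/
def liftP {α β : Type u} (P : β → Prop) (inp : Input α β) : Prop :=
  ∀ a b, inp a = some b → P b

/-- The componentwise lifting of a function to inputs. -/
def liftF {α β γ : Type u} (f : β → γ) (inp : Input α β) : Input α γ :=
  fun a => (inp a).map f

/-- An input is small if its domain has cardinality smaller than that of `var`. -/
def smallDom {α β : Type u} (inp : Input α β) : Prop :=
  Cardinal.mk (idom inp) < Cardinal.mk var

/-! ### Quasiterms -/

mutual
/-- Quasiterms: raw terms before quotienting by alpha-equivalence. -/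
inductive QTerm : Type u where
  | qVar : varsort → var → QTerm
  | qOp : opsym → (index → Option QTerm) → (bindex → Option QAbs) → QTerm
/-- Quasiabstractions. -/
inductive QAbs : Type u where
  | qAbs : varsort → var → QTerm → QAbs
end

/-- Transposition of two variables. -/
noncomputable def swapVar (z1 z2 x : var) : var :=
  if x = z1 then z2 else if x = z2 then z1 else x

/-- Sort-aware transposition of variables (acts only on variables of varsort `zs`). -/
noncomputable def swapVarS (zs xs : varsort) (z1 z2 x : var) : var :=
  if xs = zs then swapVar var z1 z2 x else x

variable {var varsort index bindex opsym}

/-- Swapping of the variables `z1`, `z2` at varsort `zs` in a quasiterm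
(transposing them everywhere, including binding positions). -/
noncomputable def qSwap (z1 z2 : var) (zs : varsort) :
    QTerm var varsort index bindex opsym → QTerm var varsort index bindex opsym :=
  QTerm.rec (motive_1 := fun _ => QTerm var varsort index bindex opsym)
    (motive_2 := fun _ => QAbs var varsort index bindex opsym)
    (motive_3 := fun _ => Option (QTerm var varsort index bindex opsym))
    (motive_4 := fun _ => Option (QAbs var varsort index bindex opsym))
    (fun xs x => .qVar xs (swapVarS var varsort zs xs z1 z2 x))
    (fun d _ _ rinp rbinp => .qOp d rinp rbinp)
    (fun xs x _ rX => .qAbs xs (swapVarS var varsort zs xs z1 z2 x) rX)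
    none (fun _ r => some r) none (fun _ r => some r)

/-- Swapping of variables in a quasiabstraction. -/
noncomputable def qSwapAbs (z1 z2 : var) (zs : varsort) :
    QAbs var varsort index bindex opsym → QAbs var varsort index bindex opsym
  | .qAbs xs x X => .qAbs xs (swapVarS var varsort zs xs z1 z2 x) (qSwap z1 z2 zs X)

/-! ### Freshness and goodness -/

mutual
/-- `QFresh ys y X`: the variable `y` of varsort `ys` has no free occurrence in `X`. -/
inductive QFresh : varsort → var → QTerm var varsort index bindex opsym → Prop where
  | qVar : ∀ {ys y xs x}, (ys, y) ≠ (xs, x) → QFresh ys y (.qVar xs x)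
  | qOp : ∀ {ys y d inp binp}, (∀ i X, inp i = some X → QFresh ys y X) →
      (∀ j A, binp j = some A → QFreshAbs ys y A) → QFresh ys y (.qOp d inp binp)
/-- Freshness for quasiabstractions. -/
inductive QFreshAbs : varsort → var → QAbs var varsort index bindex opsym → Prop where
  | qAbs_bound : ∀ {xs x X}, QFreshAbs xs x (.qAbs xs x X)
  | qAbs_body : ∀ {ys y xs x X}, QFresh ys y X → QFreshAbs ys y (.qAbs xs x X)
end

mutual
/-- Good quasiterms: all constructors branch less than `|var|`. -/
inductive QGood : QTerm var varsort index bindex opsym → Prop where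
  | qVar : ∀ {xs x}, QGood (.qVar xs x)
  | qOp : ∀ {d inp binp}, (∀ i X, inp i = some X → QGood X) →
      (∀ j A, binp j = some A → QGoodAbs A) →
      smallDom var inp → smallDom var binp → QGood (.qOp d inp binp)
/-- Good quasiabstractions. -/
inductive QGoodAbs : QAbs var varsort index bindex opsym → Prop where
  | qAbs : ∀ {xs x X}, QGood X → QGoodAbs (.qAbs xs x X)
end

/-! ### Alpha-equivalence -/

mutual
/-- Alpha-equivalence of quasiterms. -/
inductive Alpha : QTerm var varsort index bindex opsym →
    QTerm var varsort index bindex opsym → Prop where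
  | qVar : ∀ {xs x}, Alpha (.qVar xs x) (.qVar xs x)
  | qOp : ∀ {d inp binp inp' binp'},
      (∀ i, inp i = none ↔ inp' i = none) →
      (∀ i X X', inp i = some X → inp' i = some X' → Alpha X X') →
      (∀ j, binp j = none ↔ binp' j = none) →
      (∀ j A A', binp j = some A → binp' j = some A' → AlphaAbs A A') →
      Alpha (.qOp d inp binp) (.qOp d inp' binp')
/-- Alpha-equivalence of quasiabstractions (the exists-fresh formulation). -/
inductive AlphaAbs : QAbs var varsort index bindex opsym →
    QAbs var varsort index bindex opsym → Prop where
  | qAbs : ∀ {xs x x' X X' y}, y ∉ ({x, x'} : Set var) →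
      QFresh xs y X → QFresh xs y X' →
      Alpha (qSwap y x xs X) (qSwap y x' xs X') →
      AlphaAbs (.qAbs xs x X) (.qAbs xs x' X')
end

/-! ### Terms and abstractions as quotients -/

variable (var varsort index bindex opsym)

/-- Terms: quasiterms modulo alpha-equivalence. -/
def Term : Type u := Quot (@Alpha var varsort index bindex opsym)

/-- Abstractions: quasiabstractions modulo alpha-equivalence. -/
def Abstr : Type u := Quot (@AlphaAbs var varsort index bindex opsym)

variable {var varsort index bindex opsym}

/-- The projection from quasiterms to terms. -/
def tmk : QTerm var varsort index bindex opsym → Term var varsort index bindex opsym :=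
  Quot.mk _

/-- The projection from quasiabstractions to abstractions. -/
def amk : QAbs var varsort index bindex opsym → Abstr var varsort index bindex opsym :=
  Quot.mk _

/-- A representative of a term. -/
noncomputable def trep (X : Term var varsort index bindex opsym) :
    QTerm var varsort index bindex opsym := Quot.out X

/-- A representative of an abstraction. -/
noncomputable def arep (A : Abstr var varsort index bindex opsym) :
    QAbs var varsort index bindex opsym := Quot.out A

/-- Good terms. -/
def good (X : Term var varsort index bindex opsym) : Prop := QGood (trep X)

/-- Good abstractions. -/
def goodAbs (A : Abstr var varsort index bindex opsym) : Prop := QGoodAbs (arep A)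

/-- The variable-injection constructor on terms. -/
def Var (xs : varsort) (x : var) : Term var varsort index bindex opsym :=
  tmk (.qVar xs x)

/-- The operation constructor on terms. -/
noncomputable def Op (d : opsym) (inp : Input index (Term var varsort index bindex opsym))
    (binp : Input bindex (Abstr var varsort index bindex opsym)) :
    Term var varsort index bindex opsym :=
  tmk (.qOp d (liftF trep inp) (liftF arep binp))

/-- The abstraction constructor. -/
noncomputable def Abs (xs : varsort) (x : var) (X : Term var varsort index bindex opsym) :
    Abstr var varsort index bindex opsym :=
  amk (.qAbs xs x (trep X))

/-- Freshness on terms. -/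
def fresh (ys : varsort) (y : var) (X : Term var varsort index bindex opsym) : Prop :=
  QFresh ys y (trep X)

/-- Freshness on abstractions. -/
def freshAbs (ys : varsort) (y : var) (A : Abstr var varsort index bindex opsym) : Prop :=
  QFreshAbs ys y (arep A)

/-- Swapping on terms. -/
noncomputable def tswap (X : Term var varsort index bindex opsym)
    (z1 z2 : var) (zs : varsort) : Term var varsort index bindex opsym :=
  tmk (qSwap z1 z2 zs (trep X))

/-! ### Substitution -/

mutual
/-- The graph of capture-avoiding substitution on quasiterms:
`QSubst X Y y ys Z` means that `Z` is a result of substituting `Y` for the free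
occurrences of the variable `y` of varsort `ys` in `X` (along a capture-free
representative). -/
inductive QSubst : QTerm var varsort index bindex opsym →
    QTerm var varsort index bindex opsym → var → varsort →
    QTerm var varsort index bindex opsym → Prop where
  | var_eq : ∀ {Y y ys}, QSubst (.qVar ys y) Y y ys Y
  | var_ne : ∀ {Y y ys xs x}, (xs, x) ≠ (ys, y) → QSubst (.qVar xs x) Y y ys (.qVar xs x)
  | op : ∀ {Y y ys d inp binp inp' binp'},
      (∀ i, inp i = none ↔ inp' i = none) →
      (∀ i X X', inp i = some X → inp' i = some X' → QSubst X Y y ys X') →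
      (∀ j, binp j = none ↔ binp' j = none) →
      (∀ j A A', binp j = some A → binp' j = some A' → QSubstAbs A Y y ys A') →
      QSubst (.qOp d inp binp) Y y ys (.qOp d inp' binp')
/-- The graph of capture-avoiding substitution on quasiabstractions. -/
inductive QSubstAbs : QAbs var varsort index bindex opsym →
    QTerm var varsort index bindex opsym → var → varsort →
    QAbs var varsort index bindex opsym → Prop where
  | abs : ∀ {Y y ys xs x X X'}, (xs, x) ≠ (ys, y) → QFresh xs x Y →
      QSubst X Y y ys X' → QSubstAbs (.qAbs xs x X) Y y ys (.qAbs xs x X')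
end

/-- The graph of capture-avoiding substitution on terms. -/
def SubstRel (X Y : Term var varsort index bindex opsym) (y : var) (ys : varsort)
    (Z : Term var varsort index bindex opsym) : Prop :=
  ∃ qX qZ, tmk qX = X ∧ tmk qZ = Z ∧ QSubst qX (trep Y) y ys qZ

/-- Capture-avoiding substitution on terms: `subst X Y y ys` is `X[Y/y]_ys`. -/
noncomputable def subst (X Y : Term var varsort index bindex opsym)
    (y : var) (ys : varsort) : Term var varsort index bindex opsym :=
  if h : ∃ Z, SubstRel X Y y ys Z then h.choose else X

/-- The graph of capture-avoiding substitution on abstractions. -/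
def SubstAbsRel (A : Abstr var varsort index bindex opsym)
    (Y : Term var varsort index bindex opsym) (y : var) (ys : varsort)
    (B : Abstr var varsort index bindex opsym) : Prop :=
  ∃ qA qB, amk qA = A ∧ amk qB = B ∧ QSubstAbs qA (trep Y) y ys qB

/-- Capture-avoiding substitution on abstractions: `substAbs A Y y ys` is `A[Y/y]_ys`. -/
noncomputable def substAbs (A : Abstr var varsort index bindex opsym)
    (Y : Term var varsort index bindex opsym) (y : var) (ys : varsort) :
    Abstr var varsort index bindex opsym :=
  if h : ∃ B, SubstAbsRel A Y y ys B then h.choose else A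

/-! ### Parallel substitution -/

mutual
/-- The graph of capture-avoiding parallel substitution on quasiterms, along an
assignment `ρ : varsort → var → Option qterm`. -/
inductive QPSubst : QTerm var varsort index bindex opsym →
    (varsort → var → Option (QTerm var varsort index bindex opsym)) →
    QTerm var varsort index bindex opsym → Prop where
  | var_some : ∀ {ρ xs x Y}, ρ xs x = some Y → QPSubst (.qVar xs x) ρ Y
  | var_none : ∀ {ρ xs x}, ρ xs x = none → QPSubst (.qVar xs x) ρ (.qVar xs x)
  | op : ∀ {ρ d inp binp inp' binp'},
      (∀ i, inp i = none ↔ inp' i = none) →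
      (∀ i X X', inp i = some X → inp' i = some X' → QPSubst X ρ X') →
      (∀ j, binp j = none ↔ binp' j = none) →
      (∀ j A A', binp j = some A → binp' j = some A' → QPSubstAbs A ρ A') →
      QPSubst (.qOp d inp binp) ρ (.qOp d inp' binp')
/-- The graph of capture-avoiding parallel substitution on quasiabstractions. -/
inductive QPSubstAbs : QAbs var varsort index bindex opsym →
    (varsort → var → Option (QTerm var varsort index bindex opsym)) →
    QAbs var varsort index bindex opsym → Prop where
  | abs : ∀ {ρ xs x X X'}, ρ xs x = none →
      (∀ ys y Y, ρ ys y = some Y → QFresh xs x Y) →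
      QPSubst X ρ X' → QPSubstAbs (.qAbs xs x X) ρ (.qAbs xs x X')
end

/-- Turning a term-valued assignment into a quasiterm-valued one, by picking
representatives. -/
noncomputable def qassign (ρ : varsort → var → Option (Term var varsort index bindex opsym)) :
    varsort → var → Option (QTerm var varsort index bindex opsym) :=
  fun xs x => (ρ xs x).map trep

/-- The graph of parallel substitution on terms. -/
def PSubstRel (X : Term var varsort index bindex opsym)
    (ρ : varsort → var → Option (Term var varsort index bindex opsym))
    (Z : Term var varsort index bindex opsym) : Prop :=
  ∃ qX qZ, tmk qX = X ∧ tmk qZ = Z ∧ QPSubst qX (qassign ρ) qZ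

/-- Capture-avoiding parallel substitution on terms: `psubst X ρ` is `X[ρ]`. -/
noncomputable def psubst (X : Term var varsort index bindex opsym)
    (ρ : varsort → var → Option (Term var varsort index bindex opsym)) :
    Term var varsort index bindex opsym :=
  if h : ∃ Z, PSubstRel X ρ Z then h.choose else X

/-- The graph of parallel substitution on abstractions. -/
def PSubstAbsRel (A : Abstr var varsort index bindex opsym)
    (ρ : varsort → var → Option (Term var varsort index bindex opsym))
    (B : Abstr var varsort index bindex opsym) : Prop :=
  ∃ qA qB, amk qA = A ∧ amk qB = B ∧ QPSubstAbs qA (qassign ρ) qB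

/-- Capture-avoiding parallel substitution on abstractions. -/
noncomputable def psubstAbs (A : Abstr var varsort index bindex opsym)
    (ρ : varsort → var → Option (Term var varsort index bindex opsym)) :
    Abstr var varsort index bindex opsym :=
  if h : ∃ B, PSubstAbsRel A ρ B then h.choose else A

@[simp] theorem swapVar_invol (z1 z2 x : var) :
    swapVar var z1 z2 (swapVar var z1 z2 x) = x := by
  unfold swapVar; split_ifs <;> simp_all

@[simp] theorem swapVarS_invol (zs xs : varsort) (z1 z2 x : var) :
    swapVarS var varsort zs xs z1 z2 (swapVarS var varsort zs xs z1 z2 x) = x := by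
  unfold swapVarS; split_ifs <;> simp_all [swapVar_invol]

theorem swapVarS_inj {zs xs : varsort} {z1 z2 a b : var}
    (h : swapVarS var varsort zs xs z1 z2 a = swapVarS var varsort zs xs z1 z2 b) : a = b := by
  have := congrArg (swapVarS var varsort zs xs z1 z2) h
  rwa [swapVarS_invol, swapVarS_invol] at this

@[simp] theorem qSwap_qVar (z1 z2 : var) (zs xs : varsort) (x : var) :
    qSwap z1 z2 zs (.qVar xs x : QTerm var varsort index bindex opsym)
      = .qVar xs (swapVarS var varsort zs xs z1 z2 x) := rfl

@[simp] theorem qSwapAbs_qAbs (z1 z2 : var) (zs xs : varsort) (x : var)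
    (X : QTerm var varsort index bindex opsym) :
    qSwapAbs z1 z2 zs (.qAbs xs x X)
      = .qAbs xs (swapVarS var varsort zs xs z1 z2 x) (qSwap z1 z2 zs X) := rfl

@[simp] theorem qSwap_qOp (z1 z2 : var) (zs : varsort) (d : opsym)
    (inp : index → Option (QTerm var varsort index bindex opsym))
    (binp : bindex → Option (QAbs var varsort index bindex opsym)) :
    qSwap z1 z2 zs (.qOp d inp binp) =
      .qOp d (fun i => (inp i).map (qSwap z1 z2 zs)) (fun j => (binp j).map (qSwapAbs z1 z2 zs)) := by
  show QTerm.qOp d _ _ = _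
  congr 1
  · funext i; cases h : inp i <;> rfl
  · funext j; cases h : binp j with
    | none => rfl
    | some A => cases A; rfl

theorem qSwap_invol (z1 z2 : var) (zs : varsort)
    (X : QTerm var varsort index bindex opsym) :
    qSwap z1 z2 zs (qSwap z1 z2 zs X) = X := by
  refine QTerm.rec (motive_1 := fun X => qSwap z1 z2 zs (qSwap z1 z2 zs X) = X)
    (motive_2 := fun A => qSwapAbs z1 z2 zs (qSwapAbs z1 z2 zs A) = A)
    (motive_3 := fun o => Option.map (qSwap z1 z2 zs) (Option.map (qSwap z1 z2 zs) o) = o)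
    (motive_4 := fun o => Option.map (qSwapAbs z1 z2 zs) (Option.map (qSwapAbs z1 z2 zs) o) = o)
    ?_ ?_ ?_ ?_ ?_ ?_ ?_ X
  · intro xs x; simp
  · intro d inp binp ih1 ih2
    simp only [qSwap_qOp]
    congr 1
    · funext i; exact ih1 i
    · funext j; exact ih2 j
  · intro xs x X ih; simp [ih]
  · rfl
  · intro X ih; simp [ih]
  · rfl
  · intro A ih; simp [ih]
theorem QFresh.swap {ys : varsort} {y : var} {X : QTerm var varsort index bindex opsym}
    (h : QFresh ys y X) (z1 z2 : var) (zs : varsort) :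
    QFresh ys (swapVarS var varsort zs ys z1 z2 y) (qSwap z1 z2 zs X) := by
  refine QFresh.rec
    (motive_1 := fun X _ => ∀ z1 z2 zs,
      QFresh ys (swapVarS var varsort zs ys z1 z2 y) (qSwap z1 z2 zs X))
    (motive_2 := fun A _ => ∀ z1 z2 zs,
      QFreshAbs ys (swapVarS var varsort zs ys z1 z2 y) (qSwapAbs z1 z2 zs A))
    ?_ ?_ ?_ ?_ h z1 z2 zs
  · intro xs x hne z1 z2 zs
    simp only [qSwap_qVar]
    refine QFresh.qVar (fun he => hne ?_)
    obtain ⟨h1, h2⟩ := Prod.mk.injEq .. ▸ he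
    subst h1
    exact Prod.ext rfl (swapVarS_inj h2)
  · intro d inp binp h1 h2 ih1 ih2 z1 z2 zs
    simp only [qSwap_qOp]
    refine QFresh.qOp (fun i X hX => ?_) (fun j A hA => ?_)
    · obtain ⟨X0, hX0, rfl⟩ := Option.map_eq_some_iff.mp hX
      exact ih1 i X0 hX0 z1 z2 zs
    · obtain ⟨A0, hA0, rfl⟩ := Option.map_eq_some_iff.mp hA
      exact ih2 j A0 hA0 z1 z2 zs
  · intro X z1 z2 zs
    simp only [qSwapAbs_qAbs]
    exact QFreshAbs.qAbs_bound
  · intro xs x X h ih z1 z2 zs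
    simp only [qSwapAbs_qAbs]
    exact QFreshAbs.qAbs_body (ih z1 z2 zs)

theorem QFresh.unswap {ys : varsort} {y : var} {X : QTerm var varsort index bindex opsym}
    {z1 z2 : var} {zs : varsort}
    (h : QFresh ys y (qSwap z1 z2 zs X)) :
    QFresh ys (swapVarS var varsort zs ys z1 z2 y) X := by
  have := h.swap z1 z2 zs
  rwa [qSwap_invol] at this
theorem fresh_op_mp {d : opsym}
    {inp inp' : index → Option (QTerm var varsort index bindex opsym)}
    {binp binp' : bindex → Option (QAbs var varsort index bindex opsym)}
    (e1 : ∀ i, inp i = none ↔ inp' i = none)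
    (e2 : ∀ j, binp j = none ↔ binp' j = none)
    (ih1 : ∀ i X X', inp i = some X → inp' i = some X' →
      ∀ ys y, QFresh ys y X → QFresh ys y X')
    (ih2 : ∀ j A A', binp j = some A → binp' j = some A' →
      ∀ ys y, QFreshAbs ys y A → QFreshAbs ys y A')
    (ys : varsort) (y : var) (h : QFresh ys y (.qOp d inp binp)) :
    QFresh ys y (.qOp d inp' binp') := by
  cases h with
  | qOp hi hb =>
    refine QFresh.qOp (fun i X' hX' => ?_) (fun j A' hA' => ?_)
    · have hne : inp i ≠ none := fun hn => by simp [(e1 i).mp hn] at hX'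
      obtain ⟨X, hX⟩ := Option.ne_none_iff_exists'.mp hne
      exact ih1 i X X' hX hX' ys y (hi i X hX)
    · have hne : binp j ≠ none := fun hn => by simp [(e2 j).mp hn] at hA'
      obtain ⟨A, hA⟩ := Option.ne_none_iff_exists'.mp hne
      exact ih2 j A A' hA hA' ys y (hb j A hA)

theorem freshAbs_step {xs : varsort} {x x' y0 : var}
    {X X' : QTerm var varsort index bindex opsym}
    (hx : y0 ≠ x) (hx' : y0 ≠ x')
    (h1 : QFresh xs y0 X) (h2 : QFresh xs y0 X')
    (ih : ∀ ys y, QFresh ys y (qSwap y0 x xs X) → QFresh ys y (qSwap y0 x' xs X'))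
    (ys : varsort) (y : var) (h : QFreshAbs ys y (.qAbs xs x X)) :
    QFreshAbs ys y (.qAbs xs x' X') := by
  have step : ∀ ys y, QFresh ys y X →
      QFresh ys (swapVarS var varsort xs ys y0 x'
        (swapVarS var varsort xs ys y0 x y)) X' := by
    intro ys y hf
    exact QFresh.unswap (ih ys _ (hf.swap y0 x xs))
  -- the key: freshness of x in X' (used when (ys,y) = (xs,x))
  have keyx : x = x' ∨ QFresh xs x X' := by
    by_cases hxx' : x = x'
    · exact Or.inl hxx'
    · refine Or.inr ?_
      have hxy0 : x ≠ y0 := fun e => hx e.symm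
      have := step xs y0 h1
      rwa [show swapVarS var varsort xs xs y0 x y0 = x by simp [swapVarS, swapVar],
        show swapVarS var varsort xs xs y0 x' x = x by
          simp [swapVarS, swapVar, hxy0, hxx']] at this
  cases h with
  | qAbs_bound =>
    rcases keyx with rfl | hk
    · exact QFreshAbs.qAbs_bound
    · exact QFreshAbs.qAbs_body hk
  | qAbs_body hb =>
    by_cases hbx' : (ys, y) = (xs, x')
    · obtain ⟨rfl, rfl⟩ := Prod.mk.injEq .. ▸ hbx'
      exact QFreshAbs.qAbs_bound
    by_cases hbx : (ys, y) = (xs, x)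
    · obtain ⟨rfl, rfl⟩ := Prod.mk.injEq .. ▸ hbx
      rcases keyx with rfl | hk
      · exact QFreshAbs.qAbs_bound
      · exact QFreshAbs.qAbs_body hk
    by_cases hby0 : (ys, y) = (xs, y0)
    · obtain ⟨rfl, rfl⟩ := Prod.mk.injEq .. ▸ hby0
      exact QFreshAbs.qAbs_body h2
    · refine QFreshAbs.qAbs_body ?_
      have := step ys y hb
      by_cases hs : ys = xs
      · subst hs
        have hy0 : y ≠ y0 := fun e => hby0 (by rw [e])
        have hyx : y ≠ x := fun e => hbx (by rw [e])
        have hyx' : y ≠ x' := fun e => hbx' (by rw [e])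
        rwa [show swapVarS var varsort ys ys y0 x y = y by simp [swapVarS, swapVar, hy0, hyx],
          show swapVarS var varsort ys ys y0 x' y = y by
            simp [swapVarS, swapVar, hy0, hyx']] at this
      · rwa [show swapVarS var varsort xs ys y0 x y = y by simp [swapVarS, hs],
          show swapVarS var varsort xs ys y0 x' y = y by simp [swapVarS, hs]] at this
theorem alpha_fresh_iff {X X' : QTerm var varsort index bindex opsym}
    (h : Alpha X X') (ys : varsort) (y : var) :
    QFresh ys y X ↔ QFresh ys y X' := by
  refine Alpha.rec
    (motive_1 := fun X X' _ => ∀ ys y, QFresh ys y X ↔ QFresh ys y X')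
    (motive_2 := fun A A' _ => ∀ ys y, QFreshAbs ys y A ↔ QFreshAbs ys y A')
    ?_ ?_ ?_ h ys y
  · intro xs x ys y; exact Iff.rfl
  · intro d inp binp inp' binp' e1 a1 e2 a2 ih1 ih2 ys y
    constructor
    · exact fresh_op_mp e1 e2
        (fun i X X' hX hX' ys y => (ih1 i X X' hX hX' ys y).mp)
        (fun j A A' hA hA' ys y => (ih2 j A A' hA hA' ys y).mp) ys y
    · exact fresh_op_mp (fun i => (e1 i).symm) (fun j => (e2 j).symm)
        (fun i X' X hX' hX ys y => (ih1 i X X' hX hX' ys y).mpr)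
        (fun j A' A hA' hA ys y => (ih2 j A A' hA hA' ys y).mpr) ys y
  · intro xs x x' X X' y0 hy0 h1 h2 hal ih ys y
    simp only [Set.mem_insert_iff, Set.mem_singleton_iff, not_or] at hy0
    exact ⟨freshAbs_step hy0.1 hy0.2 h1 h2 (fun ys y => (ih ys y).mp) ys y,
      freshAbs_step hy0.2 hy0.1 h2 h1 (fun ys y => (ih ys y).mpr) ys y⟩

theorem alphaAbs_fresh_iff {A A' : QAbs var varsort index bindex opsym}
    (h : AlphaAbs A A') (ys : varsort) (y : var) :
    QFreshAbs ys y A ↔ QFreshAbs ys y A' := by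
  refine AlphaAbs.rec
    (motive_1 := fun X X' _ => ∀ ys y, QFresh ys y X ↔ QFresh ys y X')
    (motive_2 := fun A A' _ => ∀ ys y, QFreshAbs ys y A ↔ QFreshAbs ys y A')
    ?_ ?_ ?_ h ys y
  · intro xs x ys y; exact Iff.rfl
  · intro d inp binp inp' binp' e1 a1 e2 a2 ih1 ih2 ys y
    constructor
    · exact fresh_op_mp e1 e2
        (fun i X X' hX hX' ys y => (ih1 i X X' hX hX' ys y).mp)
        (fun j A A' hA hA' ys y => (ih2 j A A' hA hA' ys y).mp) ys y
    · exact fresh_op_mp (fun i => (e1 i).symm) (fun j => (e2 j).symm)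
        (fun i X' X hX' hX ys y => (ih1 i X X' hX hX' ys y).mpr)
        (fun j A' A hA' hA ys y => (ih2 j A A' hA hA' ys y).mpr) ys y
  · intro xs x x' X X' y0 hy0 h1 h2 hal ih ys y
    simp only [Set.mem_insert_iff, Set.mem_singleton_iff, not_or] at hy0
    exact ⟨freshAbs_step hy0.1 hy0.2 h1 h2 (fun ys y => (ih ys y).mp) ys y,
      freshAbs_step hy0.2 hy0.1 h2 h1 (fun ys y => (ih ys y).mpr) ys y⟩

theorem eqvGen_fresh_iff {X X' : QTerm var varsort index bindex opsym}
    (h : Relation.EqvGen Alpha X X') (ys : varsort) (y : var) :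
    QFresh ys y X ↔ QFresh ys y X' := by
  induction h with
  | rel _ _ h => exact alpha_fresh_iff h ys y
  | refl => exact Iff.rfl
  | symm _ _ _ ih => exact ih.symm
  | trans _ _ _ _ _ ih1 ih2 => exact ih1.trans ih2

theorem eqvGen_freshAbs_iff {A A' : QAbs var varsort index bindex opsym}
    (h : Relation.EqvGen AlphaAbs A A') (ys : varsort) (y : var) :
    QFreshAbs ys y A ↔ QFreshAbs ys y A' := by
  induction h with
  | rel _ _ h => exact alphaAbs_fresh_iff h ys y
  | refl => exact Iff.rfl
  | symm _ _ _ ih => exact ih.symm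
  | trans _ _ _ _ _ ih1 ih2 => exact ih1.trans ih2

theorem fresh_tmk {q : QTerm var varsort index bindex opsym} {ys : varsort} {y : var} :
    fresh ys y (tmk q) ↔ QFresh ys y q := by
  have : Relation.EqvGen Alpha (trep (tmk q)) q := by
    apply Quot.eqvGen_exact
    show Quot.mk _ (Quot.out (Quot.mk _ q)) = _
    rw [Quot.out_eq]
  exact eqvGen_fresh_iff this ys y

theorem freshAbs_amk {q : QAbs var varsort index bindex opsym} {ys : varsort} {y : var} :
    freshAbs ys y (amk q) ↔ QFreshAbs ys y q := by
  have : Relation.EqvGen AlphaAbs (arep (amk q)) q := by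
    apply Quot.eqvGen_exact
    show Quot.mk _ (Quot.out (Quot.mk _ q)) = _
    rw [Quot.out_eq]
  exact eqvGen_freshAbs_iff this ys y

/-- implicational simplification rules for freshness. -/
theorem fresh_simp_imp (hinf : Cardinal.aleph0 ≤ Cardinal.mk var)
    (hreg : (Cardinal.mk var).IsRegular)
    (X : Term var varsort index bindex opsym) (d : opsym)
    (inp : Input index (Term var varsort index bindex opsym)) (binp : Input bindex (Abstr var varsort index bindex opsym))
    (hX : good X) (hinp : liftP good inp) (hbinp : liftP goodAbs binp)
    (hsi : smallDom var inp) (hsb : smallDom var binp)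
    (ys xs : varsort) (y x : var) :
    ((ys, y) ≠ (xs, x) → fresh ys y (Var xs x : Term var varsort index bindex opsym)) ∧
    (liftP (fresh ys y) inp → liftP (freshAbs ys y) binp →
      fresh ys y (Op d inp binp)) ∧
    ((ys, y) = (xs, x) ∨ fresh ys y X → freshAbs ys y (Abs xs x X)) := by
  refine ⟨fun hne => ?_, fun hfi hfb => ?_, fun hd => ?_⟩
  · exact fresh_tmk.mpr (QFresh.qVar hne)
  · refine fresh_tmk.mpr (QFresh.qOp (fun i Z hZ => ?_) (fun j B hB => ?_))
    · obtain ⟨T, hT, rfl⟩ := Option.map_eq_some_iff.mp hZ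
      exact hfi i T hT
    · obtain ⟨B0, hB0, rfl⟩ := Option.map_eq_some_iff.mp hB
      exact hfb j B0 hB0
  · refine freshAbs_amk.mpr ?_
    rcases hd with he | hf
    · obtain ⟨rfl, rfl⟩ := Prod.mk.injEq .. ▸ he
      exact QFreshAbs.qAbs_bound
    · exact QFreshAbs.qAbs_body hf

end Binding
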